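/- Let k₁, k₂, k_i ∈ ℝ, and let x₁, x₂, d, a, b, u : ℝ → ℝ be functions such that x₁, x₂ are differentiable, d is twice differentiable, x₁ is continuous, b(t) ≠ 0 for all t, and for all t: x₁'(t) = x₂(t) + d(t), x₂'(t) = a(t) + b(t)·u(t), and u(t) = -b(t)⁻¹·(a(t) + k₁·x₁(t) + k₂·x₂(t) + k_i·∫₀ᵗ x₁(s) ds). Then x₁ is three times differentiable and x₁'''(t) + k₂·x₁''(t) + k₁·x₁'(t) + k_i·x₁(t) = k₂·d'(t) + d''(t) for all t. -/

import Mathlib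

/-- FLC with integral action (FLC-I) applied to ẋ₁ = x₂ + d, ẋ₂ = a + b·u with
u = -b⁻¹(a + k₁x₁ + k₂x₂ + kᵢ∫₀ᵗ x₁): the closed loop satisfies
x₁''' + k₂x₁'' + k₁x₁' + kᵢx₁ = k₂ḋ + d̈. -/
theorem stmt_3 (k₁ k₂ kᵢ : ℝ) (x₁ x₂ d a b u : ℝ → ℝ)
    (hx₁ : Differentiable ℝ x₁) (hx₂ : Differentiable ℝ x₂)
    (hd : Differentiable ℝ d) (hd' : Differentiable ℝ (deriv d))
    (hx₁c : Continuous x₁) (hb : ∀ t, b t ≠ 0)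
    (hdx₁ : ∀ t, deriv x₁ t = x₂ t + d t)
    (hdx₂ : ∀ t, deriv x₂ t = a t + b t * u t)
    (hu : ∀ t, u t = -(b t)⁻¹ *
      (a t + k₁ * x₁ t + k₂ * x₂ t + kᵢ * ∫ s in (0:ℝ)..t, x₁ s)) :
    Differentiable ℝ (deriv x₁) ∧ Differentiable ℝ (deriv (deriv x₁)) ∧
    ∀ t, deriv (deriv (deriv x₁)) t + k₂ * deriv (deriv x₁) t +
      k₁ * deriv x₁ t + kᵢ * x₁ t = k₂ * deriv d t + deriv (deriv d) t := by
  set I : ℝ → ℝ := fun t => ∫ s in (0:ℝ)..t, x₁ s with hI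
  have hIdiff : Differentiable ℝ I := fun t =>
    ((hx₁c.integral_hasStrictDerivAt 0 t).hasDerivAt.differentiableAt)
  have hIderiv : ∀ t, deriv I t = x₁ t := fun t =>
    (hx₁c.integral_hasStrictDerivAt 0 t).hasDerivAt.deriv
  set F : ℝ → ℝ := fun t => -(k₁ * x₁ t + k₂ * x₂ t + kᵢ * I t) with hF
  have hFdiff : Differentiable ℝ F := by
    apply Differentiable.neg
    exact ((hx₁.const_mul k₁).add (hx₂.const_mul k₂)).add (hIdiff.const_mul kᵢ)
  have hFderiv : ∀ t, deriv F t = -(k₁ * deriv x₁ t + k₂ * deriv x₂ t + kᵢ * x₁ t) := by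
    intro t
    have h1 : deriv F t = -(deriv (fun t => k₁ * x₁ t + k₂ * x₂ t + kᵢ * I t) t) := by
      rw [hF, deriv.fun_neg]
    rw [h1, deriv_fun_add (((hx₁ t).const_mul k₁).fun_add ((hx₂ t).const_mul k₂))
        ((hIdiff t).const_mul kᵢ),
      deriv_fun_add ((hx₁ t).const_mul k₁) ((hx₂ t).const_mul k₂),
      deriv_const_mul k₁ (hx₁ t), deriv_const_mul k₂ (hx₂ t),
      deriv_const_mul kᵢ (hIdiff t), hIderiv]
  have hx₂F : deriv x₂ = F := by
    funext t
    rw [hdx₂, hu]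
    field_simp [hb t]
    ring
  have hdx₁' : deriv x₁ = fun t => x₂ t + d t := funext hdx₁
  have h2 : Differentiable ℝ (deriv x₁) := by rw [hdx₁']; exact hx₂.add hd
  have hD2 : deriv (deriv x₁) = fun t => F t + deriv d t := by
    rw [hdx₁']
    funext t
    rw [deriv_fun_add (hx₂ t) (hd t), ← hx₂F]
  have h3 : Differentiable ℝ (deriv (deriv x₁)) := by
    rw [hD2]; exact hFdiff.add hd'
  refine ⟨h2, h3, fun t => ?_⟩
  have hD3 : deriv (deriv (deriv x₁)) t = deriv F t + deriv (deriv d) t := by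
    rw [hD2, deriv_fun_add (hFdiff t) (hd' t)]
  rw [hD3, hFderiv, hD2, hdx₁, hx₂F]
  simp only
  simp only [hF]
  ring
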